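/- arXiv:1501.07458 — 4 statements merged into one kernel-verified Lean document; each statement's English description precedes it below -/
import Mathlib

section
/- A distribution F on ℝ with \bar{F}(x) > 0 for all x is long-tailed if and only if there exists a monotone increasing function h with h(x) → ∞ and h(x) < x such that F(x - h(x), x + h(x)] = o(\bar{F}(x)) as x → ∞. -/
open MeasureTheory Filter Set Asymptotics

/-- Tail function of a distribution: `F̄(x) = μ(x, ∞)`. -/
noncomputable def tail (μ : Measure ℝ) (x : ℝ) : ℝ := (μ (Set.Ioi x)).toReal

/-- `F(a, b] = F(b) - F(a)`. -/
noncomputable def intv (μ : Measure ℝ) (a b : ℝ) : ℝ := (μ (Set.Ioc a b)).toReal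

/-- A distribution is long-tailed if `F̄(x+1)/F̄(x) → 1` as `x → ∞`. -/
def LongTailed (μ : Measure ℝ) : Prop :=
  Tendsto (fun x => tail μ (x + 1) / tail μ x) atTop (nhds 1)

/-- Convolution of two distributions on ℝ (law of the sum of independent rvs). -/
noncomputable def mconv (μ ν : Measure ℝ) : Measure ℝ :=
  Measure.map (fun p : ℝ × ℝ => p.1 + p.2) (μ.prod ν)

/-- `n`-fold convolution of a distribution with itself; `nconv μ 0` is the unit mass at 0. -/
noncomputable def nconv (μ : Measure ℝ) : ℕ → Measure ℝ
  | 0 => Measure.dirac 0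
  | n + 1 => mconv (nconv μ n) μ

lemma tail_add_intv (μ : Measure ℝ) [IsProbabilityMeasure μ] {a b : ℝ} (hab : a ≤ b) :
    tail μ a = intv μ a b + tail μ b := by
  have h : Set.Ioi a = Set.Ioc a b ∪ Set.Ioi b := (Set.Ioc_union_Ioi_eq_Ioi hab).symm
  rw [tail, h, measure_union (Set.Ioc_disjoint_Ioi le_rfl) measurableSet_Ioi,
    ENNReal.toReal_add (measure_ne_top μ _) (measure_ne_top μ _)]
  rfl

lemma ratio_add (μ : Measure ℝ) [IsProbabilityMeasure μ] (hpos : ∀ x, 0 < tail μ x)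
    (hL : LongTailed μ) (n : ℕ) :
    Tendsto (fun x => tail μ (x + n) / tail μ x) atTop (nhds 1) := by
  induction n with
  | zero =>
      have h : (fun x => tail μ (x + (0:ℕ)) / tail μ x) = fun _ => (1:ℝ) :=
        funext fun x => by rw [Nat.cast_zero, add_zero, div_self (hpos x).ne']
      rw [h]; exact tendsto_const_nhds
  | succ n ih =>
      have hshift : Tendsto (fun x : ℝ => x + (n : ℝ)) atTop atTop :=
        tendsto_atTop_add_const_right atTop _ tendsto_id
      have h1 := (hL.comp hshift).mul ih
      rw [one_mul] at h1
      refine h1.congr fun x => ?_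
      have hne := (hpos (x + n)).ne'
      show tail μ (x + ↑n + 1) / tail μ (x + ↑n) * (tail μ (x + ↑n) / tail μ x)
          = tail μ (x + ↑(n+1)) / tail μ x
      rw [div_mul_div_comm, mul_comm (tail μ (x + ↑n)) (tail μ x),
        mul_div_mul_right _ _ hne]
      push_cast; ring_nf

lemma ratio_sub (μ : Measure ℝ) [IsProbabilityMeasure μ] (hpos : ∀ x, 0 < tail μ x)
    (hL : LongTailed μ) (n : ℕ) :
    Tendsto (fun x => tail μ (x - n) / tail μ x) atTop (nhds 1) := by
  have hshift : Tendsto (fun x : ℝ => x - (n : ℝ)) atTop atTop :=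
    tendsto_atTop_add_const_right atTop _ tendsto_id
  have h1 := ((ratio_add μ hpos hL n).comp hshift).inv₀ one_ne_zero
  rw [inv_one] at h1
  refine h1.congr fun x => ?_
  show (tail μ (x - ↑n + ↑n) / tail μ (x - ↑n))⁻¹ = tail μ (x - ↑n) / tail μ x
  rw [sub_add_cancel, inv_div]

lemma intv_ratio (μ : Measure ℝ) [IsProbabilityMeasure μ] (hpos : ∀ x, 0 < tail μ x)
    (hL : LongTailed μ) (n : ℕ) :
    Tendsto (fun x => intv μ (x - n) (x + n) / tail μ x) atTop (nhds 0) := by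
  have h1 := (ratio_sub μ hpos hL n).sub (ratio_add μ hpos hL n)
  rw [sub_self] at h1
  refine h1.congr fun x => ?_
  have hab : x - (n:ℝ) ≤ x + n := by
    have : (0:ℝ) ≤ n := Nat.cast_nonneg n
    linarith
  have h2 := tail_add_intv μ hab
  rw [← sub_div]
  congr 1
  linarith

lemma tail_anti (μ : Measure ℝ) [IsProbabilityMeasure μ] : Antitone (tail μ) :=
  fun a b hab => ENNReal.toReal_mono (measure_ne_top μ _)
    (measure_mono (Set.Ioi_subset_Ioi hab))


/-- A distribution with everywhere positive tail is long-tailed iff there is a monotone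
increasing function h growing to infinity, with h x < x, such that
F(x - h x, x + h x] = o(tail F x). -/
theorem stmt1 (μ : Measure ℝ) [IsProbabilityMeasure μ] (hpos : ∀ x, 0 < tail μ x) :
    LongTailed μ ↔ ∃ h : ℝ → ℝ, Monotone h ∧ Tendsto h atTop atTop ∧ (∀ x, h x < x) ∧
      (fun x => intv μ (x - h x) (x + h x)) =o[atTop] tail μ := by
  constructor
  · intro hL
    -- diagonalization
    have hY : ∀ n : ℕ, ∃ Y : ℝ, ∀ x ≥ Y, intv μ (x - n) (x + n) ≤ tail μ x / (n + 1) := by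
      intro n
      have npos : (0:ℝ) < n + 1 := by positivity
      have h1 : ∀ᶠ x in atTop, intv μ (x - n) (x + n) / tail μ x < 1 / (n + 1) :=
        (intv_ratio μ hpos hL n).eventually (gt_mem_nhds (by positivity))
      obtain ⟨Y, hY⟩ := eventually_atTop.1 h1
      refine ⟨Y, fun x hx => ?_⟩
      have h2 := hY x hx
      rw [div_lt_div_iff₀ (hpos x) npos] at h2
      rw [le_div_iff₀ npos]
      linarith
    choose Y hYp using hY
    set X : ℕ → ℝ := fun n => max (Y n) ((n : ℝ) + 2) with hX
    have hXY : ∀ n, Y n ≤ X n := fun n => le_max_left _ _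
    have hXn : ∀ n : ℕ, (n : ℝ) + 2 ≤ X n := fun n => le_max_right _ _
    set S : ℝ → Set ℕ := fun x => {n | X n ≤ x} with hS
    have hbdd : ∀ x, BddAbove (S x) := by
      intro x
      refine ⟨Nat.floor (max x 0), fun n hn => ?_⟩
      have h1 : (n : ℝ) ≤ max x 0 := by
        have := hXn n
        have : (n : ℝ) + 2 ≤ x := le_trans this hn
        have hx0 : (n:ℝ) ≤ x := by linarith
        exact le_trans hx0 (le_max_left _ _)
      exact Nat.le_floor h1
    set g : ℝ → ℕ := fun x => sSup (S x) with hg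
    have hgmono : Monotone g := by
      intro a b hab
      rcases Set.eq_empty_or_nonempty (S a) with he | hne
      · simp [hg, he, csSup_empty]
      · exact csSup_le_csSup (hbdd b) hne (fun n hn => le_trans hn hab)
    have hgmem : ∀ x, (S x).Nonempty → g x ∈ S x := fun x hne => Nat.sSup_mem hne (hbdd x)
    have hgge : ∀ n x, X n ≤ x → n ≤ g x := fun n x hx => le_csSup (hbdd x) hx
    refine ⟨fun x => min (g x : ℝ) (x - 1), ?_, ?_, ?_, ?_⟩
    · exact Monotone.min (fun a b hab => Nat.cast_le.2 (hgmono hab))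
        (fun a b hab => by linarith)
    · rw [tendsto_atTop]
      intro b
      have hN : ∀ᶠ x in atTop, (b : ℝ) ≤ (g x : ℝ) := by
        filter_upwards [eventually_ge_atTop (X ⌈b⌉₊)] with x hx
        have h1 : (⌈b⌉₊ : ℕ) ≤ g x := hgge _ _ hx
        calc b ≤ (⌈b⌉₊ : ℝ) := Nat.le_ceil b
          _ ≤ (g x : ℝ) := Nat.cast_le.2 h1
      filter_upwards [hN, eventually_ge_atTop (b + 1)] with x h1 h2
      exact le_min h1 (by linarith)
    · intro x
      have : min ((g x : ℝ)) (x - 1) ≤ x - 1 := min_le_right _ _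
      linarith
    · rw [isLittleO_iff]
      intro c hc
      obtain ⟨n, hn⟩ := exists_nat_one_div_lt hc
      filter_upwards [eventually_ge_atTop (X n)] with x hx
      have hne : (S x).Nonempty := ⟨n, hx⟩
      have hmem := hgmem x hne
      have hXgx : X (g x) ≤ x := hmem
      have hgx2 : (g x : ℝ) + 2 ≤ x := le_trans (hXn _) hXgx
      have hmin : min ((g x : ℝ)) (x - 1) = (g x : ℝ) := min_eq_left (by linarith)
      have hYgx : Y (g x) ≤ x := le_trans (hXY _) hXgx
      have hb := hYp (g x) x hYgx
      have hng : n ≤ g x := hgge n x hx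
      have h2 : tail μ x / ((g x : ℝ) + 1) ≤ tail μ x / ((n : ℝ) + 1) := by
        apply div_le_div_of_nonneg_left (le_of_lt (hpos x)) (by positivity)
        exact_mod_cast Nat.succ_le_succ hng
      have h3 : tail μ x / ((n : ℝ) + 1) ≤ c * tail μ x := by
        rw [div_eq_mul_one_div, mul_comm (tail μ x)]
        exact mul_le_mul_of_nonneg_right (le_of_lt hn) (le_of_lt (hpos x))
      rw [Real.norm_eq_abs, Real.norm_eq_abs, hmin,
        abs_of_nonneg (show (0:ℝ) ≤ intv μ (x - (g x : ℝ)) (x + (g x : ℝ)) from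
          ENNReal.toReal_nonneg),
        abs_of_nonneg (le_of_lt (hpos x))]
      calc intv μ (x - (g x : ℝ)) (x + (g x : ℝ)) ≤ tail μ x / ((g x : ℝ) + 1) := hb
        _ ≤ c * tail μ x := le_trans h2 h3
  · rintro ⟨h, hmono, htop, hlt, ho⟩
    have hdiv : Tendsto (fun x => intv μ (x - h x) (x + h x) / tail μ x) atTop (nhds 0) :=
      ho.tendsto_div_nhds_zero
    have h1 : ∀ᶠ x in atTop, (1:ℝ) ≤ h x := htop.eventually (eventually_ge_atTop 1)
    have hsq : Tendsto (fun x => intv μ x (x + 1) / tail μ x) atTop (nhds 0) := by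
      apply squeeze_zero' (g := fun x => intv μ (x - h x) (x + h x) / tail μ x)
      · filter_upwards with x
        exact div_nonneg ENNReal.toReal_nonneg (le_of_lt (hpos x))
      · filter_upwards [h1] with x hx
        have hsub : Set.Ioc x (x + 1) ⊆ Set.Ioc (x - h x) (x + h x) :=
          Set.Ioc_subset_Ioc (by linarith) (by linarith)
        have hle : intv μ x (x + 1) ≤ intv μ (x - h x) (x + h x) :=
          ENNReal.toReal_mono (measure_ne_top μ _) (measure_mono hsub)
        gcongr
        exact le_of_lt (hpos x)
      · exact hdiv
    have key : ∀ x : ℝ, tail μ (x + 1) / tail μ x = 1 - intv μ x (x + 1) / tail μ x := by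
      intro x
      have h2 := tail_add_intv μ (show x ≤ x + 1 by linarith)
      have hne := (hpos x).ne'
      rw [eq_sub_iff_add_eq, ← add_div, div_eq_one_iff_eq hne]
      linarith
    have h3 : Tendsto (fun x => 1 - intv μ x (x + 1) / tail μ x) atTop (nhds (1 - 0)) :=
      hsq.const_sub 1
    rw [sub_zero] at h3
    exact h3.congr fun x => (key x).symm
end

section
/- Let X₁ and X₂ be independent random variables with distributions F₁ and F₂, and suppose the convolution F₁ * F₂ is long-tailed. Then for every c > 0, F₁(x - c, x + c] = o(\overline{F₁*F₂}(x)) as x → ∞. -/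
open MeasureTheory Filter Set Asymptotics

lemma tail_mono' (μ : Measure ℝ) [IsFiniteMeasure μ] {x y : ℝ} (h : x ≤ y) :
    tail μ y ≤ tail μ x :=
  ENNReal.toReal_mono (measure_ne_top μ _) (measure_mono (Set.Ioi_subset_Ioi h))

lemma tail_nonneg' (μ : Measure ℝ) (x : ℝ) : 0 ≤ tail μ x := ENNReal.toReal_nonneg

instance mconv_prob (F₁ F₂ : Measure ℝ) [IsProbabilityMeasure F₁] [IsProbabilityMeasure F₂] :
    IsProbabilityMeasure (mconv F₁ F₂) :=
  Measure.isProbabilityMeasure_map measurable_add.aemeasurable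

lemma tail_pos_of_longTailed {G : Measure ℝ} [IsFiniteMeasure G] (hL : LongTailed G) (x : ℝ) :
    0 < tail G x := by
  by_contra h
  push_neg at h
  have hx0 : tail G x = 0 := le_antisymm h (tail_nonneg' G x)
  have hev : (fun y => tail G (y + 1) / tail G y) =ᶠ[atTop] fun _ => (0 : ℝ) := by
    filter_upwards [eventually_ge_atTop x] with y hy
    have h1 : tail G y = 0 :=
      le_antisymm (hx0 ▸ tail_mono' G hy) (tail_nonneg' G y)
    simp [h1]
  have h0 : Tendsto (fun y => tail G (y + 1) / tail G y) atTop (nhds 0) :=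
    Tendsto.congr' hev.symm tendsto_const_nhds
  exact one_ne_zero (tendsto_nhds_unique hL h0)

lemma shift_nat {G : Measure ℝ} [IsFiniteMeasure G] (hL : LongTailed G) (m : ℕ) :
    Tendsto (fun x => tail G (x + m) / tail G x) atTop (nhds 1) := by
  induction m with
  | zero =>
    have : (fun x => tail G (x + (0 : ℕ)) / tail G x) = fun _ => (1 : ℝ) := by
      funext x
      simp [div_self (tail_pos_of_longTailed hL x).ne']
    rw [this]; exact tendsto_const_nhds
  | succ m ih =>
    have h1 : Tendsto (fun x : ℝ => tail G ((x + 1) + m) / tail G (x + 1)) atTop (nhds 1) :=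
      ih.comp (tendsto_atTop_add_const_right _ 1 tendsto_id)
    have h2 := h1.mul hL
    rw [mul_one] at h2
    refine h2.congr fun x => ?_
    have hne : tail G (x + 1) ≠ 0 := (tail_pos_of_longTailed hL (x + 1)).ne'
    have e : x + 1 + (m : ℝ) = x + ((m : ℕ) + 1 : ℕ) := by push_cast; ring
    field_simp
    ring_nf
    push_cast
    ring_nf

lemma shift_real {G : Measure ℝ} [IsFiniteMeasure G] (hL : LongTailed G) (t : ℝ) :
    Tendsto (fun x => tail G (x + t) / tail G x) atTop (nhds 1) := by
  have key : ∀ s : ℝ, 0 ≤ s → Tendsto (fun x => tail G (x + s) / tail G x) atTop (nhds 1) := by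
    intro s hs
    have hm : s ≤ (⌈s⌉₊ : ℝ) := Nat.le_ceil s
    refine tendsto_of_tendsto_of_tendsto_of_le_of_le (shift_nat hL ⌈s⌉₊)
      (tendsto_const_nhds : Tendsto (fun _ : ℝ => (1 : ℝ)) atTop (nhds 1)) ?_ ?_
    · intro x
      exact div_le_div_of_nonneg_right (tail_mono' G (by linarith))
        (tail_pos_of_longTailed hL x).le
    · intro x
      exact (div_le_one (tail_pos_of_longTailed hL x)).mpr (tail_mono' G (by linarith))
  rcases le_or_gt 0 t with h | h
  · exact key t h
  · have h1 := (key (-t) (by linarith)).comp (tendsto_atTop_add_const_right atTop t tendsto_id)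
    have h2 := h1.inv₀ one_ne_zero
    rw [inv_one] at h2
    refine h2.congr fun x => ?_
    simp only [Function.comp, id_eq]
    rw [inv_div]
    congr 2
    ring

lemma intv_eq_tail_sub {μ : Measure ℝ} [IsFiniteMeasure μ] {a b : ℝ} (h : a ≤ b) :
    intv μ a b = tail μ a - tail μ b := by
  have hsplit : μ (Set.Ioi a) = μ (Set.Ioc a b) + μ (Set.Ioi b) := by
    rw [← Set.Ioc_union_Ioi_eq_Ioi h,
      measure_union (Set.Ioc_disjoint_Ioi le_rfl) measurableSet_Ioi]
  unfold intv tail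
  rw [hsplit, ENNReal.toReal_add (measure_ne_top μ _) (measure_ne_top μ _)]
  ring

lemma conv_bound (F₁ F₂ : Measure ℝ) [IsProbabilityMeasure F₁] [IsProbabilityMeasure F₂]
    (a b d₁ d₂ : ℝ) :
    intv F₁ a b * intv F₂ d₁ d₂ ≤ intv (mconv F₁ F₂) (a + d₁) (b + d₂) := by
  have hsub : (Set.Ioc a b) ×ˢ (Set.Ioc d₁ d₂) ⊆
      (fun p : ℝ × ℝ => p.1 + p.2) ⁻¹' Set.Ioc (a + d₁) (b + d₂) := by
    rintro ⟨x, y⟩ ⟨⟨hx1, hx2⟩, hy1, hy2⟩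
    exact ⟨add_lt_add hx1 hy1, add_le_add hx2 hy2⟩
  have h1 : F₁ (Set.Ioc a b) * F₂ (Set.Ioc d₁ d₂) ≤ (mconv F₁ F₂) (Set.Ioc (a + d₁) (b + d₂)) := by
    rw [mconv, Measure.map_apply measurable_add measurableSet_Ioc]
    calc F₁ (Set.Ioc a b) * F₂ (Set.Ioc d₁ d₂)
        = (F₁.prod F₂) ((Set.Ioc a b) ×ˢ (Set.Ioc d₁ d₂)) := (Measure.prod_prod _ _).symm
      _ ≤ _ := measure_mono hsub
  unfold intv
  rw [← ENNReal.toReal_mul]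
  exact ENNReal.toReal_mono (measure_ne_top _ _) h1

lemma exists_pos_intv (F₂ : Measure ℝ) [IsProbabilityMeasure F₂] :
    ∃ n : ℕ, 0 < intv F₂ (-(n : ℝ)) n := by
  by_contra h
  push_neg at h
  have h0 : ∀ n : ℕ, F₂ (Set.Ioc (-(n : ℝ)) n) = 0 := by
    intro n
    have h1 : intv F₂ (-(n : ℝ)) n = 0 := le_antisymm (h n) ENNReal.toReal_nonneg
    unfold intv at h1
    rcases ENNReal.toReal_eq_zero_iff _ |>.mp h1 with h2 | h2
    · exact h2
    · exact absurd h2 (measure_ne_top _ _)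
  have huniv : (Set.univ : Set ℝ) = ⋃ n : ℕ, Set.Ioc (-(n : ℝ)) n := by
    ext x
    simp only [Set.mem_univ, Set.mem_iUnion, Set.mem_Ioc, true_iff]
    obtain ⟨n, hn⟩ := exists_nat_gt |x|
    have := abs_lt.mp hn
    exact ⟨n, by linarith [this.1], by linarith [this.2]⟩
  have hz : F₂ Set.univ = 0 := by
    rw [huniv]; exact measure_iUnion_null h0
  rw [measure_univ] at hz
  exact one_ne_zero hz

/-- If the convolution of F1 and F2 is long-tailed then, for every c > 0,
F1(x - c, x + c] = o(tail (F1 * F2) x). -/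
theorem stmt2 (F₁ F₂ : Measure ℝ) [IsProbabilityMeasure F₁] [IsProbabilityMeasure F₂]
    (hL : LongTailed (mconv F₁ F₂)) :
    ∀ c > 0, (fun x => intv F₁ (x - c) (x + c)) =o[atTop] tail (mconv F₁ F₂) := by
  intro c hc
  set G := mconv F₁ F₂ with hG
  haveI : IsProbabilityMeasure G := mconv_prob F₁ F₂
  obtain ⟨n, hq⟩ := exists_pos_intv F₂
  set q := intv F₂ (-(n : ℝ)) n with hqdef
  rw [isLittleO_iff]
  intro ε hε
  have hGpos : ∀ x, 0 < tail G x := tail_pos_of_longTailed hL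
  have hA : Tendsto (fun x => tail G (x - (c + n)) / tail G x) atTop (nhds 1) := by
    refine (shift_real hL (-(c + n))).congr fun x => ?_
    rw [← sub_eq_add_neg]
  have hB : Tendsto (fun x => tail G (x + (c + n)) / tail G x) atTop (nhds 1) :=
    shift_real hL (c + n)
  have hD : Tendsto (fun x => (tail G (x - (c + n)) - tail G (x + (c + n))) / tail G x)
      atTop (nhds 0) := by
    have h := hA.sub hB
    rw [sub_self] at h
    exact h.congr fun x => (sub_div _ _ _).symm
  have hev : ∀ᶠ x in atTop,
      (tail G (x - (c + n)) - tail G (x + (c + n))) / tail G x < ε * q :=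
    hD.eventually_lt_const (by positivity)
  filter_upwards [hev] with x hx
  have hGx := hGpos x
  have key : intv F₁ (x - c) (x + c) * q ≤ tail G (x - (c + n)) - tail G (x + (c + n)) := by
    have h1 := conv_bound F₁ F₂ (x - c) (x + c) (-(n : ℝ)) n
    have e1 : (x - c) + -(n : ℝ) = x - (c + n) := by ring
    have e2 : (x + c) + (n : ℝ) = x + (c + n) := by ring
    rw [e1, e2] at h1
    calc intv F₁ (x - c) (x + c) * q
        ≤ intv (mconv F₁ F₂) (x - (c + ↑n)) (x + (c + ↑n)) := h1
      _ = tail G (x - (c + ↑n)) - tail G (x + (c + ↑n)) :=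
          intv_eq_tail_sub (by linarith [Nat.cast_nonneg (α := ℝ) n])
  have hsum : tail G (x - (c + n)) - tail G (x + (c + n)) < ε * q * tail G x := by
    have := (div_lt_iff₀ hGx).mp hx
    linarith
  have hineq : intv F₁ (x - c) (x + c) * q < ε * tail G x * q := by
    calc intv F₁ (x - c) (x + c) * q ≤ _ := key
      _ < ε * q * tail G x := hsum
      _ = ε * tail G x * q := by ring
  have hfin : intv F₁ (x - c) (x + c) ≤ ε * tail G x :=
    le_of_lt (lt_of_mul_lt_mul_right hineq hq.le)
  have h1 : ‖intv F₁ (x - c) (x + c)‖ = intv F₁ (x - c) (x + c) :=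
    Real.norm_of_nonneg ENNReal.toReal_nonneg
  have h2 : ‖tail G x‖ = tail G x := Real.norm_of_nonneg (tail_nonneg' G x)
  rw [h1, h2]
  exact hfin
end

section
/- Let X₁,...,Xₙ be independent random variables with distributions F₁,...,Fₙ, and let Hₙ = F₁ * ⋯ * Fₙ be the distribution of their sum. If Hₙ is long-tailed, then for every c > 0 and every i ∈ {1,...,n}, Fᵢ(x - c, x + c] = o(\bar{Hₙ}(x)) as x → ∞. -/
open MeasureTheory Filter Set Asymptotics
open scoped ENNReal

/-- Convolution of a finite list of distributions. -/
noncomputable def convList : List (Measure ℝ) → Measure ℝ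
  | [] => Measure.dirac 0
  | μ :: l => mconv μ (convList l)

/- ### Auxiliary lemmas -/

lemma mconv_prob_s3 (μ ν : Measure ℝ) [IsProbabilityMeasure μ] [IsProbabilityMeasure ν] :
    IsProbabilityMeasure (mconv μ ν) :=
  Measure.isProbabilityMeasure_map (measurable_fst.add measurable_snd).aemeasurable

lemma convList_prob (l : List (Measure ℝ)) (h : ∀ μ ∈ l, IsProbabilityMeasure μ) :
    IsProbabilityMeasure (convList l) := by
  induction l with
  | nil => simp only [convList]; infer_instance
  | cons μ l ih =>
    haveI : IsProbabilityMeasure μ := h μ (by simp)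
    haveI : IsProbabilityMeasure (convList l) := ih fun ν hν => h ν (List.mem_cons_of_mem _ hν)
    exact mconv_prob_s3 μ (convList l)

lemma mconv_Ioc_le (μ ν : Measure ℝ) [SFinite ν] (s t u v : ℝ) :
    μ (Set.Ioc s t) * ν (Set.Ioc u v) ≤ mconv μ ν (Set.Ioc (s + u) (t + v)) := by
  rw [mconv, Measure.map_apply (by fun_prop : Measurable fun p : ℝ × ℝ => p.1 + p.2) measurableSet_Ioc,
    ← Measure.prod_prod]
  refine measure_mono ?_
  rintro ⟨p, q⟩ hpq
  simp only [Set.mem_prod, Set.mem_Ioc] at hpq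
  simp only [Set.mem_preimage, Set.mem_Ioc]
  exact ⟨add_lt_add_of_lt_of_le hpq.1.1 hpq.2.1.le, add_le_add hpq.1.2 hpq.2.2⟩

lemma exists_half (ν : Measure ℝ) [IsProbabilityMeasure ν] :
    ∃ a : ℝ, 0 < a ∧ 1/2 ≤ ν (Set.Ioc (-a) a) := by
  have hmono : Monotone (fun n : ℕ => Set.Ioc (-(n : ℝ)) (n : ℝ)) := by
    intro m n hmn
    have : (m : ℝ) ≤ n := by exact_mod_cast hmn
    exact Set.Ioc_subset_Ioc (by linarith) this
  have hun : ⋃ n : ℕ, Set.Ioc (-(n : ℝ)) (n : ℝ) = Set.univ := by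
    ext x
    simp only [Set.mem_iUnion, Set.mem_Ioc, Set.mem_univ, iff_true]
    obtain ⟨n, hn⟩ := exists_nat_gt |x|
    have h1 : -(n : ℝ) < x := by cases abs_lt.mp hn; linarith
    have h2 : x ≤ (n : ℝ) := by cases abs_lt.mp hn; linarith
    exact ⟨n, h1, h2⟩
  have htend := tendsto_measure_iUnion_atTop (μ := ν) hmono
  rw [hun, measure_univ] at htend
  have h12 : (1/2 : ℝ≥0∞) < 1 := by
    rw [ENNReal.div_lt_iff (by norm_num) (by norm_num)]; norm_num
  have hev := htend.eventually (eventually_ge_nhds h12)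
  obtain ⟨n, hn⟩ := hev.exists
  simp only [Function.comp_apply] at hn
  refine ⟨(n : ℝ) + 1, by positivity, le_trans hn (measure_mono ?_)⟩
  exact Set.Ioc_subset_Ioc (by linarith) (by linarith)

lemma key (l : List (Measure ℝ)) (h : ∀ μ ∈ l, IsProbabilityMeasure μ) :
    ∀ i (hi : i < l.length), ∃ a : ℝ, 0 < a ∧ ∃ δ : ℝ≥0∞, 0 < δ ∧ δ ≠ ⊤ ∧
      ∀ s t : ℝ, δ * (l.get ⟨i, hi⟩) (Set.Ioc s t) ≤ convList l (Set.Ioc (s - a) (t + a)) := by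
  induction l with
  | nil => intro i hi; simp at hi
  | cons μ l ih =>
    intro i hi
    haveI : IsProbabilityMeasure μ := h μ (by simp)
    haveI : IsProbabilityMeasure (convList l) :=
      convList_prob l fun ν hν => h ν (List.mem_cons_of_mem _ hν)
    haveI : SFinite (convList l) := inferInstance
    cases i with
    | zero =>
      obtain ⟨a, ha, hhalf⟩ := exists_half (convList l)
      refine ⟨a, ha, 1/2, by norm_num, by norm_num, fun s t => ?_⟩
      have h1 : (1/2 : ℝ≥0∞) * μ (Set.Ioc s t) ≤
          μ (Set.Ioc s t) * convList l (Set.Ioc (-a) a) := by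
        rw [mul_comm]; exact mul_le_mul_right hhalf _
      have h2 := mconv_Ioc_le μ (convList l) s t (-a) a
      have heq : Set.Ioc (s + -a) (t + a) = Set.Ioc (s - a) (t + a) := by
        rw [← sub_eq_add_neg]
      rw [heq] at h2
      simpa only [List.get, convList] using le_trans h1 h2
    | succ j =>
      have hj : j < l.length := by simpa using hi
      obtain ⟨a, ha, δ, hδ0, hδt, hkey⟩ :=
        ih (fun ν hν => h ν (List.mem_cons_of_mem _ hν)) j hj
      obtain ⟨b, hb, hhalf⟩ := exists_half μ
      refine ⟨a + b, by linarith, δ / 2, ?_, ?_, fun s t => ?_⟩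
      · exact ENNReal.div_pos hδ0.ne' (by norm_num)
      · exact (ENNReal.div_lt_top hδt (by norm_num)).ne
      have h1 : δ / 2 * (l.get ⟨j, hj⟩) (Set.Ioc s t) =
          (1/2 : ℝ≥0∞) * (δ * (l.get ⟨j, hj⟩) (Set.Ioc s t)) := by
        rw [ENNReal.div_eq_inv_mul, one_div, mul_assoc]
      have h2 : (1/2 : ℝ≥0∞) * (δ * (l.get ⟨j, hj⟩) (Set.Ioc s t)) ≤
          μ (Set.Ioc (-b) b) * convList l (Set.Ioc (s - a) (t + a)) :=
        mul_le_mul' hhalf (hkey s t)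
      have h3 := mconv_Ioc_le μ (convList l) (-b) b (s - a) (t + a)
      have heq : Set.Ioc (-b + (s - a)) (b + (t + a)) =
          Set.Ioc (s - (a + b)) (t + (a + b)) := by
        congr 1 <;> ring
      rw [heq] at h3
      calc δ / 2 * ((μ :: l).get ⟨j + 1, hi⟩) (Set.Ioc s t)
          = (1/2 : ℝ≥0∞) * (δ * (l.get ⟨j, hj⟩) (Set.Ioc s t)) := h1
        _ ≤ μ (Set.Ioc (-b) b) * convList l (Set.Ioc (s - a) (t + a)) := h2
        _ ≤ convList (μ :: l) (Set.Ioc (s - (a + b)) (t + (a + b))) := h3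

lemma tail_anti_s3 (H : Measure ℝ) [IsFiniteMeasure H] : Antitone (tail H) :=
  fun x y hxy => ENNReal.toReal_mono (measure_ne_top _ _)
    (measure_mono (Set.Ioi_subset_Ioi hxy))

lemma tail_pos (H : Measure ℝ) [IsFiniteMeasure H] (hL : LongTailed H) (x : ℝ) :
    0 < tail H x := by
  by_contra hx
  push_neg at hx
  have hx0 : tail H x = 0 := le_antisymm hx ENNReal.toReal_nonneg
  have hzero : Tendsto (fun y => tail H (y + 1) / tail H y) atTop (nhds 0) := by
    refine Tendsto.congr' ?_ tendsto_const_nhds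
    filter_upwards [eventually_ge_atTop x] with y hy
    have h0 : tail H y = 0 := le_antisymm (hx0 ▸ tail_anti_s3 H hy) ENNReal.toReal_nonneg
    simp [h0]
  exact (zero_ne_one : (0 : ℝ) ≠ 1).symm (tendsto_nhds_unique hL hzero)

lemma tail_shift_nat (H : Measure ℝ) [IsFiniteMeasure H] (hL : LongTailed H) (m : ℕ) :
    Tendsto (fun x => tail H (x + m) / tail H x) atTop (nhds 1) := by
  have hpos := tail_pos H hL
  induction m with
  | zero =>
    refine Tendsto.congr (fun x => ?_) tendsto_const_nhds
    rw [Nat.cast_zero, add_zero, div_self (hpos x).ne']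
  | succ m ih =>
    have hcomp : Tendsto (fun x => tail H ((x + m) + 1) / tail H (x + m)) atTop (nhds 1) :=
      hL.comp (tendsto_atTop_add_const_right atTop (m : ℝ) tendsto_id)
    have := hcomp.mul ih
    rw [mul_one] at this
    refine this.congr (fun x => ?_)
    have h1 : tail H (x + m) ≠ 0 := (hpos _).ne'
    have h2 : tail H x ≠ 0 := (hpos x).ne'
    push_cast
    rw [show x + ((m : ℝ) + 1) = x + (m : ℝ) + 1 from by ring]
    field_simp

lemma tail_shift_neg_nat (H : Measure ℝ) [IsFiniteMeasure H] (hL : LongTailed H) (m : ℕ) :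
    Tendsto (fun x => tail H (x - m) / tail H x) atTop (nhds 1) := by
  have hpos := tail_pos H hL
  have hinv : Tendsto (fun x => tail H x / tail H (x + m)) atTop (nhds 1) := by
    have := (tail_shift_nat H hL m).inv₀ one_ne_zero
    rw [inv_one] at this
    refine this.congr (fun x => ?_)
    rw [inv_div]
  have hcomp := hinv.comp (tendsto_atTop_add_const_right atTop (-(m : ℝ)) tendsto_id)
  refine hcomp.congr (fun x => ?_)
  simp only [Function.comp_apply, id_eq]
  rw [show x + -(m : ℝ) + m = x from by ring, show x + -(m : ℝ) = x - m from by ring]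

lemma tail_shift (H : Measure ℝ) [IsFiniteMeasure H] (hL : LongTailed H) (t : ℝ) :
    Tendsto (fun x => tail H (x + t) / tail H x) atTop (nhds 1) := by
  have hpos := tail_pos H hL
  obtain ⟨m, hm⟩ := exists_nat_ge |t|
  have hm1 : t ≤ m := (le_abs_self t).trans hm
  have hm2 : -(m : ℝ) ≤ t := by
    have := (neg_abs_le t); linarith [(neg_le_neg hm : -(m:ℝ) ≤ -|t|)]
  refine tendsto_of_tendsto_of_tendsto_of_le_of_le (tail_shift_nat H hL m)
    (tail_shift_neg_nat H hL m) (fun x => ?_) (fun x => ?_)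
  · have h := tail_anti_s3 H (show x + t ≤ x + m by linarith)
    exact (div_le_div_iff_of_pos_right (hpos x)).mpr h
  · have h := tail_anti_s3 H (show x - m ≤ x + t by linarith)
    exact (div_le_div_iff_of_pos_right (hpos x)).mpr h

lemma intv_eq_tail_sub_s3 (H : Measure ℝ) [IsFiniteMeasure H] {A B : ℝ} (hAB : A ≤ B) :
    intv H A B = tail H A - tail H B := by
  have hsub : Set.Ioi B ⊆ Set.Ioi A := Set.Ioi_subset_Ioi hAB
  have hdiff : Set.Ioc A B = Set.Ioi A \ Set.Ioi B := (Set.Ioi_diff_Ioi).symm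
  rw [intv, hdiff, measure_diff hsub measurableSet_Ioi.nullMeasurableSet (measure_ne_top _ _),
    ENNReal.toReal_sub_of_le (measure_mono hsub) (measure_ne_top _ _)]
  rfl

/-- If Hn = F1 * ... * Fn is long-tailed, then for every c > 0 and every i,
Fi(x - c, x + c] = o(tail Hn x). -/
theorem stmt3 (n : ℕ) (hn : 1 ≤ n) (F : Fin n → Measure ℝ)
    [∀ i, IsProbabilityMeasure (F i)]
    (hL : LongTailed (convList (List.ofFn F))) :
    ∀ c > 0, ∀ i : Fin n,
      (fun x => intv (F i) (x - c) (x + c)) =o[atTop] tail (convList (List.ofFn F)) := by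
  intro c hc i
  set H := convList (List.ofFn F) with hHdef
  haveI : IsProbabilityMeasure H := by
    refine convList_prob _ (fun μ hμ => ?_)
    rw [List.mem_ofFn] at hμ
    obtain ⟨j, rfl⟩ := hμ
    infer_instance
  have hpos := tail_pos H hL
  have hi : (i : ℕ) < (List.ofFn F).length := by simpa using i.isLt
  obtain ⟨a, ha, δ, hδ0, hδt, hkey⟩ := key (List.ofFn F)
    (fun μ hμ => by rw [List.mem_ofFn] at hμ; obtain ⟨j, rfl⟩ := hμ; infer_instance) i hi
  have hget : (List.ofFn F).get ⟨(i : ℕ), hi⟩ = F i := by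
    simp [List.get_ofFn]
  rw [hget] at hkey
  -- real-valued bound
  have hbound : ∀ x : ℝ, intv (F i) (x - c) (x + c) ≤
      δ⁻¹.toReal * intv H (x - c - a) (x + c + a) := by
    intro x
    have h1 := hkey (x - c) (x + c)
    have h2 : F i (Set.Ioc (x - c) (x + c)) ≤ δ⁻¹ * H (Set.Ioc (x - c - a) (x + c + a)) := by
      have h3 := mul_le_mul_right h1 δ⁻¹
      rwa [← mul_assoc, ENNReal.inv_mul_cancel hδ0.ne' hδt, one_mul] at h3
    have hfin : δ⁻¹ * H (Set.Ioc (x - c - a) (x + c + a)) ≠ ⊤ :=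
      ENNReal.mul_ne_top (ENNReal.inv_ne_top.mpr hδ0.ne') (measure_ne_top _ _)
    have h4 := ENNReal.toReal_mono hfin h2
    rwa [ENNReal.toReal_mul] at h4
  -- pass to ratio and squeeze
  refine (isLittleO_iff_tendsto fun x hx => absurd hx (hpos x).ne').mpr ?_
  have hshift1 : Tendsto (fun x => tail H (x - (c + a)) / tail H x) atTop (nhds 1) := by
    have := tail_shift H hL (-(c + a))
    refine this.congr (fun x => ?_)
    rw [← sub_eq_add_neg]
  have hshift2 : Tendsto (fun x => tail H (x + (c + a)) / tail H x) atTop (nhds 1) :=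
    tail_shift H hL (c + a)
  have hg : Tendsto (fun x => δ⁻¹.toReal *
      (tail H (x - (c + a)) / tail H x - tail H (x + (c + a)) / tail H x)) atTop (nhds 0) := by
    have := (hshift1.sub hshift2).const_mul δ⁻¹.toReal
    simpa using this
  refine tendsto_of_tendsto_of_tendsto_of_le_of_le tendsto_const_nhds hg
    (fun x => ?_) (fun x => ?_)
  · exact div_nonneg ENNReal.toReal_nonneg (hpos x).le
  · have hAB : x - c - a ≤ x + c + a := by linarith
    have heq : intv H (x - c - a) (x + c + a) = tail H (x - (c + a)) - tail H (x + (c + a)) := by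
      rw [intv_eq_tail_sub_s3 H hAB, show x - c - a = x - (c + a) from by ring,
        show x + c + a = x + (c + a) from by ring]
    have h5 : intv (F i) (x - c) (x + c) ≤
        δ⁻¹.toReal * (tail H (x - (c + a)) - tail H (x + (c + a))) := by
      rw [← heq]; exact hbound x
    calc intv (F i) (x - c) (x + c) / tail H x
        ≤ δ⁻¹.toReal * (tail H (x - (c + a)) - tail H (x + (c + a))) / tail H x :=
          (div_le_div_iff_of_pos_right (hpos x)).mpr h5
      _ = δ⁻¹.toReal * (tail H (x - (c + a)) / tail H x - tail H (x + (c + a)) / tail H x) := by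
          rw [mul_div_assoc, sub_div]
end

section
/- Let F₁ be a long-tailed distribution and F₂ a distribution such that F₂(x - c, x + c] = o(\bar{F₁}(x)) as x → ∞ for some c > 0. Then the convolution F₁ * F₂ is long-tailed. -/
open MeasureTheory Filter Set Asymptotics

open scoped ENNReal

-- helper: real ineq to ennreal ineq
lemma toReal_ineq {a b : ℝ≥0∞} (ha : a ≠ ⊤) (hb : b ≠ ⊤) {ε : ℝ} (hε : 0 ≤ ε)
    (h : a.toReal ≤ ε * b.toReal) : a ≤ ENNReal.ofReal ε * b := by
  calc a = ENNReal.ofReal a.toReal := (ENNReal.ofReal_toReal ha).symm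
    _ ≤ ENNReal.ofReal (ε * b.toReal) := ENNReal.ofReal_le_ofReal h
    _ = ENNReal.ofReal ε * ENNReal.ofReal b.toReal := ENNReal.ofReal_mul hε
    _ = ENNReal.ofReal ε * b := by rw [ENNReal.ofReal_toReal hb]

lemma tail_pos_of_longTailed_s4 (F₁ : Measure ℝ) [IsProbabilityMeasure F₁]
    (h₁ : LongTailed F₁) (x : ℝ) : F₁ (Set.Ioi x) ≠ 0 := by
  intro h0
  have hev : ∀ᶠ y in atTop, tail F₁ (y + 1) / tail F₁ y = 0 := by
    filter_upwards [eventually_ge_atTop x] with y hy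
    have : F₁ (Set.Ioi y) = 0 :=
      le_antisymm (le_trans (measure_mono (Set.Ioi_subset_Ioi hy)) h0.le) bot_le
    simp [tail, this]
  have : Tendsto (fun y => tail F₁ (y + 1) / tail F₁ y) atTop (nhds 0) :=
    Tendsto.congr' (by filter_upwards [hev] with y hy using hy.symm) tendsto_const_nhds
  exact one_ne_zero (tendsto_nhds_unique h₁ this)

section lemmas
variable (F₁ : Measure ℝ) [IsProbabilityMeasure F₁]

lemma meas_Ioc_add (u : ℝ) :
    F₁ (Set.Ioc u (u + 1)) + F₁ (Set.Ioi (u + 1)) = F₁ (Set.Ioi u) := by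
  rw [← measure_union (by simp [Set.disjoint_left]) measurableSet_Ioi,
    Set.Ioc_union_Ioi_eq_Ioi (by linarith)]

lemma L1eps (h₁ : LongTailed F₁) {ε : ℝ} (hε : 0 < ε) :
    ∀ᶠ u in atTop, F₁ (Set.Ioc u (u + 1)) ≤ ENNReal.ofReal ε * F₁ (Set.Ioi u) := by
  have hrat : ∀ᶠ u in atTop, 1 - ε < tail F₁ (u + 1) / tail F₁ u := by
    have := h₁ (Ioi_mem_nhds (show 1 - ε < 1 by linarith))
    exact this
  filter_upwards [hrat] with u hu
  have htu : 0 < tail F₁ u := by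
    simp only [tail]
    exact ENNReal.toReal_pos (tail_pos_of_longTailed_s4 F₁ h₁ u) (measure_ne_top _ _)
  have h2 : (1 - ε) * tail F₁ u < tail F₁ (u + 1) := by
    rw [← lt_div_iff₀ htu] at *; exact hu
  have hsum := meas_Ioc_add F₁ u
  have hIoc : (F₁ (Set.Ioc u (u + 1))).toReal = tail F₁ u - tail F₁ (u + 1) := by
    have := congrArg ENNReal.toReal hsum
    rw [ENNReal.toReal_add (measure_ne_top _ _) (measure_ne_top _ _)] at this
    simp only [tail]; linarith
  refine toReal_ineq (measure_ne_top _ _) (measure_ne_top _ _) hε.le ?_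
  rw [hIoc]; simp only [tail] at *; nlinarith

lemma baseA (h₁ : LongTailed F₁) :
    ∀ᶠ x in atTop, F₁ (Set.Ioi x) ≤ 2 * F₁ (Set.Ioi (x + 1)) := by
  have hrat : ∀ᶠ u in atTop, (1:ℝ) - 1/2 < tail F₁ (u + 1) / tail F₁ u :=
    h₁ (Ioi_mem_nhds (by norm_num))
  filter_upwards [hrat] with u hu
  have htu : 0 < tail F₁ u :=
    ENNReal.toReal_pos (tail_pos_of_longTailed_s4 F₁ h₁ u) (measure_ne_top _ _)
  have h2 : (1 - 1/2 : ℝ) * tail F₁ u < tail F₁ (u + 1) := by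
    rw [← lt_div_iff₀ htu] at *; exact hu
  have := toReal_ineq (a := F₁ (Set.Ioi u)) (b := F₁ (Set.Ioi (u+1)))
    (measure_ne_top _ _) (measure_ne_top _ _) (by norm_num : (0:ℝ) ≤ 2)
    (by simp only [tail] at h2 ⊢; linarith)
  simpa using this

lemma lemA (h₁ : LongTailed F₁) (n : ℕ) :
    ∀ᶠ x in atTop, F₁ (Set.Ioi x) ≤ 2 ^ n * F₁ (Set.Ioi (x + n)) := by
  induction n with
  | zero => simp
  | succ n ih =>
    have base' : ∀ᶠ x in atTop, F₁ (Set.Ioi (x + n)) ≤ 2 * F₁ (Set.Ioi (x + n + 1)) :=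
      (tendsto_atTop_add_const_right atTop (n:ℝ) tendsto_id).eventually (baseA F₁ h₁)
    filter_upwards [ih, base'] with x hx hb
    calc F₁ (Set.Ioi x) ≤ 2 ^ n * F₁ (Set.Ioi (x + n)) := hx
      _ ≤ 2 ^ n * (2 * F₁ (Set.Ioi (x + n + 1))) := by gcongr
      _ = 2 ^ (n + 1) * F₁ (Set.Ioi (x + (n + 1 : ℕ))) := by
          push_cast; ring_nf
end lemmas

lemma meas_Ioc_add' (μ : Measure ℝ) (u : ℝ) :
    μ (Set.Ioc u (u + 1)) + μ (Set.Ioi (u + 1)) = μ (Set.Ioi u) := by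
  rw [← measure_union (by simp [Set.disjoint_left]) measurableSet_Ioi,
    Set.Ioc_union_Ioi_eq_Ioi (by linarith)]

lemma cover (F₁ F₂ : Measure ℝ) {c ε₂ T₀ : ℝ} (hc : 0 < c)
    (hT₀ : ∀ t ≥ T₀, F₂ (Set.Ioc (t - c) (t + c)) ≤ ENNReal.ofReal ε₂ * F₁ (Set.Ioi t)) :
    ∀ n : ℕ, ∀ a ≥ T₀, F₂ (Set.Ioc a (a + 2 * c * n))
      ≤ n * ENNReal.ofReal ε₂ * F₁ (Set.Ioi a) := by
  intro n
  induction n with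
  | zero => simp
  | succ n ih =>
    intro a ha
    have hsplit : Set.Ioc a (a + 2 * c * (n + 1 : ℕ)) ⊆
        Set.Ioc a (a + 2 * c) ∪ Set.Ioc (a + 2 * c) ((a + 2 * c) + 2 * c * n) := by
      intro y hy
      rcases le_or_gt y (a + 2 * c) with h | h
      · exact Or.inl ⟨hy.1, h⟩
      · refine Or.inr ⟨h, ?_⟩
        have := hy.2; push_cast at this ⊢; linarith
    have h1 : F₂ (Set.Ioc a (a + 2 * c)) ≤ ENNReal.ofReal ε₂ * F₁ (Set.Ioi a) := by
      have := hT₀ (a + c) (by linarith)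
      have he : Set.Ioc (a + c - c) (a + c + c) = Set.Ioc a (a + 2 * c) := by
        congr 1 <;> ring
      rw [he] at this
      have hm : F₁ (Set.Ioi (a + c)) ≤ F₁ (Set.Ioi a) :=
        measure_mono (Set.Ioi_subset_Ioi (by linarith))
      exact this.trans (mul_le_mul_right hm _)
    have h2 : F₂ (Set.Ioc (a + 2 * c) ((a + 2 * c) + 2 * c * n))
        ≤ n * ENNReal.ofReal ε₂ * F₁ (Set.Ioi a) := by
      have hm : F₁ (Set.Ioi (a + 2 * c)) ≤ F₁ (Set.Ioi a) :=
        measure_mono (Set.Ioi_subset_Ioi (by linarith))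
      exact (ih (a + 2 * c) (by linarith)).trans (mul_le_mul_right hm _)
    calc F₂ (Set.Ioc a (a + 2 * c * (n + 1 : ℕ)))
        ≤ F₂ (Set.Ioc a (a + 2 * c)) + F₂ (Set.Ioc (a + 2 * c) ((a + 2 * c) + 2 * c * n)) :=
          (measure_mono hsplit).trans (measure_union_le _ _)
      _ ≤ ENNReal.ofReal ε₂ * F₁ (Set.Ioi a) + n * ENNReal.ofReal ε₂ * F₁ (Set.Ioi a) :=
          add_le_add h1 h2
      _ = (n + 1 : ℕ) * ENNReal.ofReal ε₂ * F₁ (Set.Ioi a) := by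
          push_cast; ring

lemma mconv_apply (F₁ F₂ : Measure ℝ) [SFinite F₁] [SFinite F₂] {s : Set ℝ}
    (hs : MeasurableSet s) :
    mconv F₁ F₂ s = (F₁.prod F₂) ((fun p : ℝ × ℝ => p.1 + p.2) ⁻¹' s) :=
  Measure.map_apply measurable_add hs

lemma T_eq (F₁ F₂ : Measure ℝ) [SFinite F₁] [SFinite F₂] (x : ℝ) :
    mconv F₁ F₂ (Set.Ioi x) = ∫⁻ y, F₁ (Set.Ioi (x - y)) ∂F₂ := by
  rw [mconv_apply F₁ F₂ measurableSet_Ioi,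
    Measure.prod_apply_symm (measurable_add measurableSet_Ioi)]
  refine lintegral_congr fun y => ?_
  congr 1
  ext u
  simp only [Set.mem_preimage, Set.mem_Ioi]
  constructor <;> intro h <;> linarith

lemma key_s4 (F₁ F₂ : Measure ℝ) [IsProbabilityMeasure F₁] [IsProbabilityMeasure F₂]
    (h₁ : LongTailed F₁) {c : ℝ} (hc : 0 < c)
    (ho : (fun x => intv F₂ (x - c) (x + c)) =o[atTop] tail F₁)
    {b : ℝ} (hb : F₂ (Set.Ioi b) ≠ 0) {m : ℕ}
    (lower : ∀ᶠ x in atTop,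
      F₂ (Set.Ioi b) * F₁ (Set.Ioi x) ≤ 2 ^ m * mconv F₁ F₂ (Set.Ioi x))
    {ε : ℝ} (hε : 0 < ε) :
    ∀ᶠ x in atTop,
      mconv F₁ F₂ (Set.Ioc x (x + 1)) ≤ ENNReal.ofReal ε * mconv F₁ F₂ (Set.Ioi x) := by
  obtain ⟨K, hK⟩ := eventually_atTop.1 (L1eps F₁ h₁ (half_pos hε))
  set n : ℕ := ⌈K⌉₊ + 1 with hn
  have hnK : K + 1 ≤ (n : ℝ) := by
    have := Nat.le_ceil K; push_cast [hn]; linarith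
  set N : ℕ := ⌈1 / (2 * c)⌉₊ with hNdef
  have hN1 : 1 ≤ 2 * c * N := by
    have h := Nat.le_ceil (1 / (2 * c))
    rw [div_le_iff₀ (by linarith)] at h
    calc (1:ℝ) ≤ (N:ℝ) * (2 * c) := by rw [hNdef]; exact h
      _ = 2 * c * N := by ring
  have hNpos : 0 < (N : ℝ) := by nlinarith
  set β := (F₂ (Set.Ioi b)).toReal with hβdef
  have hβ : 0 < β := ENNReal.toReal_pos hb (measure_ne_top _ _)
  set ε₂ : ℝ := ε / 2 * β / ((N : ℝ) * 2 ^ n * 2 ^ m) with hε₂def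
  have hε₂ : 0 < ε₂ := by positivity
  obtain ⟨T₀, hT₀⟩ := eventually_atTop.1 (ho.def hε₂)
  have hT₀' : ∀ t ≥ T₀, F₂ (Set.Ioc (t - c) (t + c)) ≤ ENNReal.ofReal ε₂ * F₁ (Set.Ioi t) := by
    intro t ht
    refine toReal_ineq (measure_ne_top _ _) (measure_ne_top _ _) hε₂.le ?_
    have := hT₀ t ht
    simp only [intv, tail, Real.norm_eq_abs, abs_of_nonneg ENNReal.toReal_nonneg] at this
    exact this
  have hcov := cover F₁ F₂ hc hT₀' N
  have hB : ∀ᶠ x in atTop, F₁ (Set.Ioi (x - (K + 1))) ≤ 2 ^ n * F₁ (Set.Ioi x) := by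
    have := (tendsto_atTop_add_const_right atTop (-(K + 1)) tendsto_id).eventually
      (lemA F₁ h₁ n)
    filter_upwards [this] with x hx
    simp only [id_eq] at hx
    calc F₁ (Set.Ioi (x - (K + 1))) = F₁ (Set.Ioi (x + -(K + 1))) := by ring_nf
      _ ≤ 2 ^ n * F₁ (Set.Ioi (x + -(K + 1) + n)) := hx
      _ ≤ 2 ^ n * F₁ (Set.Ioi x) :=
          mul_le_mul_right (measure_mono (Set.Ioi_subset_Ioi (by linarith))) _
  filter_upwards [eventually_ge_atTop (T₀ + K + 1), hB, lower] with x hx hxB hxL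
  set S : Set (ℝ × ℝ) := (fun p : ℝ × ℝ => p.1 + p.2) ⁻¹' (Set.Ioc x (x + 1)) with hS
  have hSm : MeasurableSet S := measurable_add measurableSet_Ioc
  set S₁ := S ∩ {p : ℝ × ℝ | p.2 ≤ x - K} with hS₁
  set S₂ := S ∩ {p : ℝ × ℝ | x - K < p.2} with hS₂
  have hS₁m : MeasurableSet S₁ := hSm.inter (measurable_snd measurableSet_Iic)
  have hS₂m : MeasurableSet S₂ := hSm.inter (measurable_snd measurableSet_Ioi)
  have hsub : S ⊆ S₁ ∪ S₂ := by
    intro p hp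
    rcases le_or_gt p.2 (x - K) with h | h
    · exact Or.inl ⟨hp, h⟩
    · exact Or.inr ⟨hp, h⟩
  have hDsplit : mconv F₁ F₂ (Set.Ioc x (x + 1)) ≤ (F₁.prod F₂) S₁ + (F₁.prod F₂) S₂ := by
    rw [mconv_apply F₁ F₂ measurableSet_Ioc]
    exact (measure_mono hsub).trans (measure_union_le _ _)
  have hS1 : (F₁.prod F₂) S₁ ≤ ENNReal.ofReal (ε / 2) * mconv F₁ F₂ (Set.Ioi x) := by
    rw [Measure.prod_apply_symm hS₁m, T_eq F₁ F₂ x,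
      ← lintegral_const_mul' _ _ ENNReal.ofReal_ne_top]
    refine lintegral_mono fun y => ?_
    rcases le_or_gt y (x - K) with h | h
    · have hset : ((fun u => (u, y)) ⁻¹' S₁) = Set.Ioc (x - y) ((x - y) + 1) := by
        ext u
        simp only [hS₁, hS, Set.mem_preimage, Set.mem_inter_iff, Set.mem_Ioc, Set.mem_setOf_eq,
          Set.mem_Ioi]
        constructor
        · rintro ⟨⟨h1, h2⟩, _⟩; exact ⟨by linarith, by linarith⟩
        · rintro ⟨h1, h2⟩; exact ⟨⟨by linarith, by linarith⟩, h⟩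
      rw [hset]
      exact hK (x - y) (by linarith)
    · have hset : ((fun u => (u, y)) ⁻¹' S₁) = ∅ := by
        ext u
        simp only [hS₁, hS, Set.mem_preimage, Set.mem_inter_iff, Set.mem_setOf_eq,
          Set.mem_empty_iff_false, iff_false, not_and]
        intro _; linarith
      simp [hset]
  have hS2 : (F₁.prod F₂) S₂
      ≤ (N : ℝ≥0∞) * ENNReal.ofReal ε₂ * F₁ (Set.Ioi (x - (K + 1))) := by
    rw [Measure.prod_apply hS₂m]
    refine le_trans (lintegral_mono fun u =>
      (?_ : F₂ (Prod.mk u ⁻¹' S₂) ≤ (N : ℝ≥0∞) * ENNReal.ofReal ε₂ * F₁ (Set.Ioi (x - (K + 1)))))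
      (by rw [lintegral_const, measure_univ, mul_one])
    rcases lt_or_ge u (K + 1) with h | h
    · have hsub2 : (Prod.mk u ⁻¹' S₂) ⊆ Set.Ioc (x - u) ((x - u) + 2 * c * N) := by
        intro y hy
        simp only [hS₂, hS, Set.mem_preimage, Set.mem_inter_iff, Set.mem_Ioc,
          Set.mem_setOf_eq] at hy
        exact ⟨by linarith [hy.1.1], by linarith [hy.1.2]⟩
      calc F₂ (Prod.mk u ⁻¹' S₂) ≤ F₂ (Set.Ioc (x - u) ((x - u) + 2 * c * N)) :=
            measure_mono hsub2
        _ ≤ (N : ℝ≥0∞) * ENNReal.ofReal ε₂ * F₁ (Set.Ioi (x - u)) :=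
            hcov (x - u) (by linarith)
        _ ≤ (N : ℝ≥0∞) * ENNReal.ofReal ε₂ * F₁ (Set.Ioi (x - (K + 1))) :=
            mul_le_mul_right (measure_mono (Set.Ioi_subset_Ioi (by linarith))) _
    · have hset : (Prod.mk u ⁻¹' S₂) = ∅ := by
        ext y
        simp only [hS₂, hS, Set.mem_preimage, Set.mem_inter_iff, Set.mem_Ioc,
          Set.mem_setOf_eq, Set.mem_empty_iff_false, iff_false, not_and]
        rintro ⟨_, h2⟩; linarith
      simp [hset]
  have hcoef : (N : ℝ≥0∞) * ENNReal.ofReal ε₂ * 2 ^ n * 2 ^ m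
      = ENNReal.ofReal (ε / 2) * ENNReal.ofReal β := by
    have h1 : ((N : ℝ≥0∞) * 2 ^ n * 2 ^ m) = ENNReal.ofReal ((N : ℝ) * 2 ^ n * 2 ^ m) := by
      rw [ENNReal.ofReal_mul (by positivity), ENNReal.ofReal_mul (by positivity)]
      norm_num [ENNReal.ofReal_pow, ENNReal.ofReal_natCast]
    calc (N : ℝ≥0∞) * ENNReal.ofReal ε₂ * 2 ^ n * 2 ^ m
        = ((N : ℝ≥0∞) * 2 ^ n * 2 ^ m) * ENNReal.ofReal ε₂ := by ring
      _ = ENNReal.ofReal (((N : ℝ) * 2 ^ n * 2 ^ m) * ε₂) := by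
          rw [h1, ← ENNReal.ofReal_mul (by positivity)]
      _ = ENNReal.ofReal (ε / 2 * β) := by
          congr 1
          rw [hε₂def]
          field_simp
      _ = ENNReal.ofReal (ε / 2) * ENNReal.ofReal β := ENNReal.ofReal_mul (by positivity)
  have hS2' : (F₁.prod F₂) S₂ ≤ ENNReal.ofReal (ε / 2) * mconv F₁ F₂ (Set.Ioi x) := by
    rw [← ENNReal.mul_le_mul_iff_left hb (measure_ne_top F₂ _)]
    calc (F₁.prod F₂) S₂ * F₂ (Set.Ioi b)
        ≤ ((N : ℝ≥0∞) * ENNReal.ofReal ε₂ * F₁ (Set.Ioi (x - (K + 1)))) * F₂ (Set.Ioi b) :=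
          mul_le_mul_left hS2 _
      _ ≤ ((N : ℝ≥0∞) * ENNReal.ofReal ε₂ * (2 ^ n * F₁ (Set.Ioi x))) * F₂ (Set.Ioi b) := by
          gcongr
      _ = ((N : ℝ≥0∞) * ENNReal.ofReal ε₂ * 2 ^ n) * (F₂ (Set.Ioi b) * F₁ (Set.Ioi x)) := by
          ring
      _ ≤ ((N : ℝ≥0∞) * ENNReal.ofReal ε₂ * 2 ^ n) * (2 ^ m * mconv F₁ F₂ (Set.Ioi x)) :=
          mul_le_mul_right hxL _
      _ = ((N : ℝ≥0∞) * ENNReal.ofReal ε₂ * 2 ^ n * 2 ^ m) * mconv F₁ F₂ (Set.Ioi x) := by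
          ring
      _ = ENNReal.ofReal (ε / 2) * mconv F₁ F₂ (Set.Ioi x) * F₂ (Set.Ioi b) := by
          rw [hcoef, hβdef, ENNReal.ofReal_toReal (measure_ne_top F₂ _)]
          ring
  calc mconv F₁ F₂ (Set.Ioc x (x + 1)) ≤ (F₁.prod F₂) S₁ + (F₁.prod F₂) S₂ := hDsplit
    _ ≤ ENNReal.ofReal (ε / 2) * mconv F₁ F₂ (Set.Ioi x)
        + ENNReal.ofReal (ε / 2) * mconv F₁ F₂ (Set.Ioi x) := add_le_add hS1 hS2'
    _ = ENNReal.ofReal ε * mconv F₁ F₂ (Set.Ioi x) := by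
        rw [← add_mul, ← ENNReal.ofReal_add (by positivity) (by positivity)]
        norm_num

lemma exists_tail_pos (F₂ : Measure ℝ) [IsProbabilityMeasure F₂] :
    ∃ b : ℝ, F₂ (Set.Ioi b) ≠ 0 := by
  by_contra h
  push_neg at h
  have huniv : (Set.univ : Set ℝ) ⊆ ⋃ n : ℕ, Set.Ioi (-(n : ℝ)) := by
    intro y _
    obtain ⟨n, hn⟩ := exists_nat_gt (-y)
    exact Set.mem_iUnion.2 ⟨n, by simp [Set.mem_Ioi]; linarith⟩
  have : F₂ Set.univ = 0 := by
    refine le_antisymm (le_trans (measure_mono huniv) ?_) bot_le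
    refine le_trans (measure_iUnion_le _) ?_
    simp [h]
  simp [measure_univ] at this

lemma lower_bound (F₁ F₂ : Measure ℝ) [IsProbabilityMeasure F₁] [IsProbabilityMeasure F₂]
    (h₁ : LongTailed F₁) (b : ℝ) :
    ∀ᶠ x in atTop,
      F₂ (Set.Ioi b) * F₁ (Set.Ioi x) ≤ 2 ^ (⌈-b⌉₊) * mconv F₁ F₂ (Set.Ioi x) := by
  set m := ⌈-b⌉₊ with hm
  filter_upwards [lemA F₁ h₁ m] with x hx
  have h1 : F₁ (Set.Ioi (x - b)) * F₂ (Set.Ioi b) ≤ mconv F₁ F₂ (Set.Ioi x) := by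
    rw [mconv_apply F₁ F₂ measurableSet_Ioi, ← Measure.prod_prod]
    refine measure_mono ?_
    rintro ⟨u, y⟩ ⟨hu, hy⟩
    simp only [Set.mem_Ioi, Set.mem_preimage] at *
    linarith
  have h2 : F₁ (Set.Ioi (x + m)) ≤ F₁ (Set.Ioi (x - b)) :=
    measure_mono (Set.Ioi_subset_Ioi (by have := Nat.le_ceil (-b); rw [← hm] at this; linarith))
  calc F₂ (Set.Ioi b) * F₁ (Set.Ioi x)
      ≤ F₂ (Set.Ioi b) * (2 ^ m * F₁ (Set.Ioi (x + m))) := mul_le_mul_right hx _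
    _ = 2 ^ m * (F₁ (Set.Ioi (x + m)) * F₂ (Set.Ioi b)) := by ring
    _ ≤ 2 ^ m * (F₁ (Set.Ioi (x - b)) * F₂ (Set.Ioi b)) :=
        mul_le_mul_right (mul_le_mul_left h2 _) _
    _ ≤ 2 ^ m * mconv F₁ F₂ (Set.Ioi x) := mul_le_mul_right h1 _


/-- If F1 is long-tailed and F2(x - c, x + c] = o(tail F1 x) for some c > 0, then
the convolution F1 * F2 is long-tailed. -/
theorem stmt4 (F₁ F₂ : Measure ℝ) [IsProbabilityMeasure F₁] [IsProbabilityMeasure F₂]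
    (h₁ : LongTailed F₁) (c : ℝ) (hc : 0 < c)
    (ho : (fun x => intv F₂ (x - c) (x + c)) =o[atTop] tail F₁) :
    LongTailed (mconv F₁ F₂) := by
  obtain ⟨b, hb⟩ := exists_tail_pos F₂
  have lower := lower_bound F₁ F₂ h₁ b
  rw [LongTailed, Metric.tendsto_nhds]
  intro ε hε
  have hkey := key_s4 F₁ F₂ h₁ hc ho hb lower (half_pos hε)
  filter_upwards [hkey, lower] with x hk hl
  have hT_ne : mconv F₁ F₂ (Set.Ioi x) ≠ ⊤ := by
    intro h
    have h1 : (F₁.prod F₂) ((fun p : ℝ × ℝ => p.1 + p.2) ⁻¹' Set.Ioi x) = ⊤ := by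
      rw [← mconv_apply F₁ F₂ measurableSet_Ioi]; exact h
    exact (measure_ne_top _ _) h1
  have hT0 : mconv F₁ F₂ (Set.Ioi x) ≠ 0 := by
    intro h0
    rw [h0, mul_zero] at hl
    exact mul_ne_zero hb (tail_pos_of_longTailed_s4 F₁ h₁ x) (le_antisymm hl bot_le)
  have hD_ne : mconv F₁ F₂ (Set.Ioc x (x + 1)) ≠ ⊤ :=
    fun h => hT_ne (eq_top_iff.2 (h ▸ measure_mono Set.Ioc_subset_Ioi_self))
  have hT1_ne : mconv F₁ F₂ (Set.Ioi (x + 1)) ≠ ⊤ :=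
    fun h => hT_ne (eq_top_iff.2 (h ▸ measure_mono (Set.Ioi_subset_Ioi (by linarith))))
  set t := tail (mconv F₁ F₂) x with htdef
  set t1 := tail (mconv F₁ F₂) (x + 1) with ht1def
  set d := (mconv F₁ F₂ (Set.Ioc x (x + 1))).toReal with hddef
  have hsum : d + t1 = t := by
    have h := congrArg ENNReal.toReal (meas_Ioc_add' (mconv F₁ F₂) x)
    rw [ENNReal.toReal_add hD_ne hT1_ne] at h
    exact h
  have ht : 0 < t := ENNReal.toReal_pos hT0 hT_ne
  have hd0 : 0 ≤ d := ENNReal.toReal_nonneg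
  have ht10 : 0 ≤ t1 := ENNReal.toReal_nonneg
  have hd : d ≤ ε / 2 * t := by
    have := (ENNReal.toReal_le_toReal hD_ne
      (ENNReal.mul_ne_top ENNReal.ofReal_ne_top hT_ne)).2 hk
    rwa [ENNReal.toReal_mul, ENNReal.toReal_ofReal (half_pos hε).le] at this
  show dist (t1 / t) 1 < ε
  have hle1 : t1 / t ≤ 1 := by
    rw [div_le_one ht]; linarith
  have hge : 1 - ε / 2 ≤ t1 / t := by
    rw [le_div_iff₀ ht]; nlinarith
  rw [Real.dist_eq, abs_of_nonpos (by linarith)]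
  linarith
end
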